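/- Let F be a field and Λ a Lagrangian subspace of F^n × F^n containing c₀ = ((1,…,1),(0,…,0)). Then there exist an integer k ≤ n(n−1)/2 + 1 and matrices A_1, …, A_k, each of which is one of the generators Ξ_j(t) or Ξ_{i,j}(t) (for some indices and some t ∈ F), such that Λ = A_1 ⋯ A_k · (F^n × {0}). (Electrically: every boundary behavior of an n-boundary-vertex network is the boundary behavior of a layerable network with at most n(n−1)/2 + 1 edges.) -/

import Mathlib

open Module
open Matrix Finset

/-- The generator `Ξ_j(t) = [[I, t E_{j,j}], [0, I]]` of the electrical linear group,
corresponding to adjoining a boundary spike at vertex `j`. -/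
def XiD {F : Type*} [Field F] {n : ℕ} (j : Fin n) (t : F) :
    Matrix (Fin n ⊕ Fin n) (Fin n ⊕ Fin n) F :=
  Matrix.fromBlocks 1 (Matrix.single j j t) 0 1

/-- The generator `Ξ_{i,j}(t) = [[I, 0], [t(E_{i,i} − E_{i,j} − E_{j,i} + E_{j,j}), I]]`
of the electrical linear group, corresponding to adjoining a boundary edge from `i` to `j`. -/
def XiOff {F : Type*} [Field F] {n : ℕ} (i j : Fin n) (t : F) :
    Matrix (Fin n ⊕ Fin n) (Fin n ⊕ Fin n) F :=
  Matrix.fromBlocks 1 0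
    (t • (Matrix.single i i (1 : F) - Matrix.single i j 1
      - Matrix.single j i 1 + Matrix.single j j 1)) 1

/-- The generating set of the electrical linear group inside `GL_{2n}(F)`. -/
def ELGen (F : Type*) [Field F] (n : ℕ) :
    Set ((Matrix (Fin n ⊕ Fin n) (Fin n ⊕ Fin n) F)ˣ) :=
  {A | (∃ j t, (A : Matrix (Fin n ⊕ Fin n) (Fin n ⊕ Fin n) F) = XiD j t) ∨
       (∃ i j t, i ≠ j ∧ (A : Matrix (Fin n ⊕ Fin n) (Fin n ⊕ Fin n) F) = XiOff i j t)}

/-- The electrical linear group `EL_n(F)`: the subgroup of `GL_{2n}(F)` generated by all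
the matrices `Ξ_j(t)` and `Ξ_{i,j}(t)`. -/
def EL (F : Type*) [Field F] (n : ℕ) :
    Subgroup ((Matrix (Fin n ⊕ Fin n) (Fin n ⊕ Fin n) F)ˣ) :=
  Subgroup.closure (ELGen F n)

section AuxStmt11

variable {F : Type*} [Field F] {n : ℕ}

lemma upper_mul (U U' : Matrix (Fin n) (Fin n) F) :
    Matrix.fromBlocks 1 U 0 1 * Matrix.fromBlocks 1 U' 0 1
      = (Matrix.fromBlocks 1 (U + U') 0 1 : Matrix (Fin n ⊕ Fin n) (Fin n ⊕ Fin n) F) := by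
  simp [Matrix.fromBlocks_multiply, add_comm]

lemma lower_mul (U U' : Matrix (Fin n) (Fin n) F) :
    Matrix.fromBlocks 1 0 U 1 * Matrix.fromBlocks 1 0 U' 1
      = (Matrix.fromBlocks 1 0 (U + U') 1 : Matrix (Fin n ⊕ Fin n) (Fin n ⊕ Fin n) F) := by
  simp [Matrix.fromBlocks_multiply, add_comm]

lemma prod_upper (L : List (Matrix (Fin n) (Fin n) F)) :
    (L.map fun U => Matrix.fromBlocks 1 U 0 1).prod
      = (Matrix.fromBlocks 1 L.sum 0 1 : Matrix (Fin n ⊕ Fin n) (Fin n ⊕ Fin n) F) := by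
  induction L with
  | nil => simp [Matrix.fromBlocks_one]
  | cons U L ih => simp [ih, upper_mul]

lemma prod_lower (L : List (Matrix (Fin n) (Fin n) F)) :
    (L.map fun U => Matrix.fromBlocks 1 0 U 1).prod
      = (Matrix.fromBlocks 1 0 L.sum 1 : Matrix (Fin n ⊕ Fin n) (Fin n ⊕ Fin n) F) := by
  induction L with
  | nil => simp [Matrix.fromBlocks_one]
  | cons U L ih => simp [ih, lower_mul]

open Module Matrix Finset

variable {F : Type*} [Field F] {n : ℕ}

lemma edge_decomp (T : Matrix (Fin n) (Fin n) F) (J : Finset (Fin n))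
    (hsym : ∀ a b, T a b = T b a)
    (hrow : ∀ a, ∑ b, T a b = 0)
    (hJ : ∀ a b, a ∈ J → b ∈ J → a ≠ b → T a b = 0) :
    (∑ p ∈ Finset.univ.filter
        (fun p : Fin n × Fin n => p.1 < p.2 ∧ ¬(p.1 ∈ J ∧ p.2 ∈ J)),
      (-(T p.1 p.2)) • (Matrix.single p.1 p.1 (1:F) - Matrix.single p.1 p.2 1
          - Matrix.single p.2 p.1 1 + Matrix.single p.2 p.2 1)) = T := by
  classical
  set G : Fin n → Fin n → Matrix (Fin n) (Fin n) F :=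
    fun a b => Matrix.single a a 1 - Matrix.single a b 1 with hG
  set A : Fin n × Fin n → Matrix (Fin n) (Fin n) F :=
    fun p => (-(T p.1 p.2)) • G p.1 p.2 with hA
  have hGdiag : ∀ a, G a a = 0 := by intro a; simp [hG]
  have hsub : Finset.univ.filter
        (fun p : Fin n × Fin n => p.1 < p.2 ∧ ¬(p.1 ∈ J ∧ p.2 ∈ J))
      ⊆ Finset.univ.filter (fun p : Fin n × Fin n => p.1 < p.2) :=
    Finset.monotone_filter_right _ (fun p _ hp => hp.1)
  rw [Finset.sum_subset hsub ?hzero]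
  case hzero =>
    intro p hp hnp
    simp only [Finset.mem_filter, Finset.mem_univ, true_and] at hp hnp
    have hb : p.1 ∈ J ∧ p.2 ∈ J := by by_contra h; exact hnp ⟨hp, h⟩
    rw [hJ p.1 p.2 hb.1 hb.2 (ne_of_lt hp)]
    simp
  have hterm : ∀ p ∈ Finset.univ.filter (fun p : Fin n × Fin n => p.1 < p.2),
      (-(T p.1 p.2)) • (Matrix.single p.1 p.1 (1:F) - Matrix.single p.1 p.2 1
          - Matrix.single p.2 p.1 1 + Matrix.single p.2 p.2 1)
        = A p + A (p.2, p.1) := by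
    intro p _
    have h1 : (Matrix.single p.1 p.1 (1:F) - Matrix.single p.1 p.2 1
          - Matrix.single p.2 p.1 1 + Matrix.single p.2 p.2 1)
        = G p.1 p.2 + G p.2 p.1 := by simp only [hG]; abel
    rw [h1, smul_add, hA]
    simp only []
    rw [hsym p.1 p.2]
  rw [Finset.sum_congr rfl hterm, Finset.sum_add_distrib]
  have hswap : (∑ p ∈ Finset.univ.filter (fun p : Fin n × Fin n => p.1 < p.2), A (p.2, p.1))
      = ∑ p ∈ Finset.univ.filter (fun p : Fin n × Fin n => ¬ p.1 < p.2), A p := by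
    rw [show (∑ p ∈ Finset.univ.filter (fun p : Fin n × Fin n => p.1 < p.2), A (p.2, p.1))
        = ∑ p ∈ Finset.univ.filter (fun p : Fin n × Fin n => p.2 < p.1), A p from ?_]
    · apply Finset.sum_subset
      · exact Finset.monotone_filter_right _ (fun p _ hp => not_lt.mpr (le_of_lt hp))
      · intro p hp hnp
        simp only [Finset.mem_filter, Finset.mem_univ, true_and, not_lt] at hp hnp
        have : p.1 = p.2 := le_antisymm hnp hp
        rw [hA]; simp only []
        rw [show p.2 = p.1 from this.symm, hGdiag, smul_zero]
    · refine Finset.sum_nbij' (fun p => (p.2, p.1)) (fun p => (p.2, p.1)) ?_ ?_ ?_ ?_ ?_ <;>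
        simp [Finset.mem_filter, Set.MapsTo, Set.LeftInvOn, Set.RightInvOn]
  rw [hswap, Finset.sum_filter_add_sum_filter_not]
  rw [Fintype.sum_prod_type]
  have : ∀ a b : Fin n, A (a, b) = (T a b) • Matrix.single a b 1
      - (T a b) • Matrix.single a a 1 := by
    intro a b; rw [hA, hG]; simp only []
    rw [smul_sub, neg_smul, neg_smul, sub_neg_eq_add]
    abel
  simp only [this]
  rw [Finset.sum_congr rfl (fun a _ => Finset.sum_sub_distrib _ _)]
  rw [Finset.sum_sub_distrib]
  have hz : (∑ a : Fin n, ∑ b : Fin n, (T a b) • Matrix.single a a (1:F)) = 0 := by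
    apply Finset.sum_eq_zero
    intro a _
    rw [← Finset.sum_smul, hrow, zero_smul]
  rw [hz, sub_zero]
  have hfin : (∑ a : Fin n, ∑ b : Fin n, (T a b) • Matrix.single a b (1:F)) = T := by
    conv_rhs => rw [Matrix.matrix_eq_sum_single T]
    apply Finset.sum_congr rfl; intro a _; apply Finset.sum_congr rfl; intro b _
    rw [Matrix.smul_single, smul_eq_mul, mul_one]
  exact hfin

open Module Matrix Finset

variable {F : Type*} [Field F] {n : ℕ}

lemma pall_card :
    (Finset.univ.filter (fun p : Fin n × Fin n => p.1 < p.2)).card = n * (n-1) / 2 := by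
  classical
  set Pall := Finset.univ.filter (fun p : Fin n × Fin n => p.1 < p.2) with hPall
  set Pgt := Finset.univ.filter (fun p : Fin n × Fin n => p.2 < p.1) with hPgt
  have h1 : Pall.card = Pgt.card := by
    refine Finset.card_nbij' (fun p => (p.2, p.1)) (fun p => (p.2, p.1)) ?_ ?_ ?_ ?_ <;>
      simp [hPall, hPgt, Finset.mem_filter, Set.MapsTo, Set.LeftInvOn, Set.RightInvOn]
  have h2 : ((Finset.univ : Finset (Fin n)).offDiag.filter
        (fun p => p.1 < p.2)).card
      + ((Finset.univ : Finset (Fin n)).offDiag.filter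
        (fun p => ¬ p.1 < p.2)).card
      = (Finset.univ : Finset (Fin n)).offDiag.card :=
    Finset.card_filter_add_card_filter_not _
  have e1 : (Finset.univ : Finset (Fin n)).offDiag.filter (fun p => p.1 < p.2)
      = Pall := by
    ext p
    simp only [Finset.mem_filter, Finset.mem_offDiag, Finset.mem_univ, true_and, hPall]
    exact ⟨fun h => h.2, fun h => ⟨ne_of_lt h, h⟩⟩
  have e2 : (Finset.univ : Finset (Fin n)).offDiag.filter (fun p => ¬ p.1 < p.2)
      = Pgt := by
    ext p
    simp only [Finset.mem_filter, Finset.mem_offDiag, Finset.mem_univ, true_and, hPgt]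
    constructor
    · rintro ⟨hne, hnlt⟩; exact lt_of_le_of_ne (not_lt.mp hnlt) (Ne.symm hne)
    · intro h; exact ⟨(ne_of_lt h).symm, not_lt.mpr (le_of_lt h)⟩
  have h3 : (Finset.univ : Finset (Fin n)).offDiag.card = n * n - n := by
    rw [Finset.offDiag_card]
    simp [Finset.card_univ]
  rw [e1, e2, ← h1, h3] at h2
  have h4 : n * (n - 1) = n * n - n := by
    cases n with
    | zero => simp
    | succ m =>
      have : (m+1)*(m+1) = (m+1)*m + (m+1) := by ring
      simp only [Nat.succ_sub_one]
      omega
  omega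

lemma count_bound (J : Finset (Fin n)) :
    J.card + (Finset.univ.filter
      (fun p : Fin n × Fin n => p.1 < p.2 ∧ ¬(p.1 ∈ J ∧ p.2 ∈ J))).card
    ≤ n * (n-1) / 2 + 1 := by
  classical
  set Pall := Finset.univ.filter (fun p : Fin n × Fin n => p.1 < p.2) with hPall
  set P := Finset.univ.filter
      (fun p : Fin n × Fin n => p.1 < p.2 ∧ ¬(p.1 ∈ J ∧ p.2 ∈ J)) with hP
  set PJ := Pall.filter (fun p => p.1 ∈ J ∧ p.2 ∈ J) with hPJ
  have hsplit : PJ.card + P.card = Pall.card := by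
    have := Finset.card_filter_add_card_filter_not
      (s := Pall) (p := fun p => p.1 ∈ J ∧ p.2 ∈ J)
    rw [show Pall.filter (fun p => ¬(p.1 ∈ J ∧ p.2 ∈ J)) = P from ?_] at this
    · exact this
    · ext p
      simp only [hP, hPall, Finset.mem_filter, Finset.mem_univ, true_and, and_assoc]
  have hJPJ : J.card ≤ PJ.card + 1 := by
    rcases J.eq_empty_or_nonempty with rfl | hne
    · simp
    · set j0 := J.min' hne with hj0
      have hinj : (J.erase j0).card ≤ PJ.card := by
        apply Finset.card_le_card_of_injOn (fun b => (j0, b))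
        · intro b hb
          have hbJ : b ∈ J := Finset.mem_of_mem_erase hb
          have hlt : j0 < b := by
            refine lt_of_le_of_ne (J.min'_le b hbJ) ?_
            exact fun h => (Finset.ne_of_mem_erase hb) h.symm
          simp only [Finset.mem_coe, hPJ, hPall, Finset.mem_filter, Finset.mem_univ, true_and]
          exact ⟨hlt, J.min'_mem hne, hbJ⟩
        · intro a _ b _ h
          exact (Prod.mk.injEq _ _ _ _).mp h |>.2
      have h5 : (J.erase j0).card = J.card - 1 :=
        Finset.card_erase_of_mem (by rw [hj0]; exact J.min'_mem hne)
      have h6 : 0 < J.card := Finset.card_pos.mpr hne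
      omega
  have hpc := pall_card (n := n)
  rw [← hPall] at hpc
  omega

open Module Matrix Finset

variable {F : Type*} [Field F] {n : ℕ}

lemma exists_coords (K : Submodule F (Fin n → F)) :
    ∃ J : Finset (Fin n),
      (∀ w ∈ K, (∀ j ∈ J, w j = 0) → w = 0) ∧
      (∀ z : Fin n → F, ∃ w ∈ K, ∀ j ∈ J, w j = z j) := by
  classical
  set ev : Fin n → Module.Dual F K :=
    fun j => (LinearMap.proj j).comp K.subtype with hev
  have hspan : Submodule.span F (Set.range ev) = ⊤ := by
    have hsurj : Function.Surjective (K.subtype.dualMap) :=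
      LinearMap.dualMap_surjective_of_injective K.injective_subtype
    have hspan' : Submodule.span F
        (Set.range fun j : Fin n => (LinearMap.proj j : (Fin n → F) →ₗ[F] F)) = ⊤ := by
      rw [Submodule.eq_top_iff']
      intro φ
      have hrep : φ = ∑ j, φ (Pi.single j 1) • (LinearMap.proj j : (Fin n → F) →ₗ[F] F) := by
        apply LinearMap.pi_ext
        intro i x
        rw [LinearMap.sum_apply]
        have : ∀ j, (φ (Pi.single j 1) • (LinearMap.proj j : (Fin n → F) →ₗ[F] F))
            (Pi.single i x) = if j = i then φ (Pi.single i x) else 0 := by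
          intro j
          rcases eq_or_ne j i with rfl | hne
          · simp only [LinearMap.smul_apply, LinearMap.proj_apply, if_pos rfl]
            rw [Pi.single_eq_same, smul_eq_mul]
            have : (Pi.single j x : Fin n → F) = x • (Pi.single j (1:F) : Fin n → F) := by
              funext a
              rcases eq_or_ne a j with rfl | h
              · simp
              · simp [Pi.single_eq_of_ne h]
            rw [this, _root_.map_smul, smul_eq_mul, mul_comm]
            simp
          · simp [Pi.single_eq_of_ne (Ne.symm hne), hne]
        rw [Finset.sum_congr rfl (fun j _ => this j)]
        simp
      rw [hrep]
      apply Submodule.sum_mem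
      intro j _
      exact Submodule.smul_mem _ _ (Submodule.subset_span ⟨j, rfl⟩)
    have hcomp : Set.range ev = K.subtype.dualMap ''
        (Set.range fun j : Fin n => (LinearMap.proj j : (Fin n → F) →ₗ[F] F)) := by
      rw [← Set.range_comp]
      rfl
    rw [hcomp, ← Submodule.map_span, hspan', Submodule.map_top,
      LinearMap.range_eq_top.mpr hsurj]
  obtain ⟨b, hbsub, hbspan, hbind⟩ := exists_linearIndependent F (Set.range ev)
  rw [hspan] at hbspan
  have hbfin : b.Finite := hbind.setFinite
  letI : Fintype b := hbfin.fintype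
  let f : b → Fin n := fun φ => (hbsub φ.2).choose
  have hf : ∀ φ : b, ev (f φ) = (φ : Module.Dual F K) := fun φ => (hbsub φ.2).choose_spec
  have hfinj : Function.Injective f := by
    intro φ ψ h
    apply Subtype.ext
    rw [← hf φ, ← hf ψ, h]
  set J : Finset (Fin n) := Finset.univ.image f with hJ
  have hcardJ : J.card = finrank F K := by
    rw [hJ, Finset.card_image_of_injective _ hfinj, Finset.card_univ]
    have hb : Fintype.card b = finrank F (Module.Dual F K) :=
      (Module.finrank_eq_card_basis (Basis.mk hbind (by rw [Subtype.range_coe, hbspan]))).symm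
    rw [hb, Subspace.dual_finrank_eq]
  have hP1 : ∀ w ∈ K, (∀ j ∈ J, w j = 0) → w = 0 := by
    intro w hw hz
    have hall : ∀ ψ : Module.Dual F K, ψ ⟨w, hw⟩ = 0 := by
      intro ψ
      have hψ : ψ ∈ Submodule.span F b := by rw [hbspan]; trivial
      induction hψ using Submodule.span_induction with
      | mem ψ hψ =>
        have hj : f ⟨ψ, hψ⟩ ∈ J := by rw [hJ]; exact Finset.mem_image_of_mem _ (Finset.mem_univ _)
        have h2 : ev (f ⟨ψ, hψ⟩) = ψ := hf ⟨ψ, hψ⟩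
        rw [← h2]
        exact hz _ hj
      | zero => simp
      | add ψ χ _ _ h1 h2 => simp [h1, h2]
      | smul c ψ _ h1 => simp [h1]
    have := (Module.forall_dual_apply_eq_zero_iff F (⟨w, hw⟩ : K)).mp hall
    exact congrArg Subtype.val this
  refine ⟨J, hP1, ?_⟩
  -- surjectivity
  set π : K →ₗ[F] (↥J → F) :=
    LinearMap.pi (fun j : ↥J => (LinearMap.proj (j : Fin n)).comp K.subtype) with hπ
  have hπinj : Function.Injective π := by
    rw [← LinearMap.ker_eq_bot, LinearMap.ker_eq_bot']
    intro w hw0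
    apply Subtype.ext
    apply hP1 w.1 w.2
    intro j hj
    exact congrFun hw0 ⟨j, hj⟩
  have hπsurj : Function.Surjective π := by
    have hfr : finrank F K = finrank F (↥J → F) := by
      rw [Module.finrank_fintype_fun_eq_card, Fintype.card_coe, hcardJ]
    exact (LinearMap.injective_iff_surjective_of_finrank_eq_finrank hfr).mp hπinj
  intro z
  obtain ⟨w, hwz⟩ := hπsurj (fun j => z j.1)
  exact ⟨w.1, w.2, fun j hj => congrFun hwz ⟨j, hj⟩⟩



end AuxStmt11

/-- Every Lagrangian subspace `Λ` of `F^n × F^n` (realized as `F^{Fin n ⊕ Fin n}`)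
containing `c₀ = ((1,…,1),(0,…,0))` can be written as `A₁ ⋯ A_k · (F^n × {0})` where
`k ≤ n(n−1)/2 + 1` and each `A_m` is one of the generators `Ξ_j(t)` or `Ξ_{i,j}(t)`.
(Electrically: every boundary behavior comes from a layerable network with at most
`n(n−1)/2 + 1` edges.) -/
theorem stmt11 {F : Type*} [Field F] {n : ℕ} (hn : 0 < n)
    (Λ : Submodule F (Fin n ⊕ Fin n → F))
    (hiso : ∀ x ∈ Λ, ∀ y ∈ Λ,
      (∑ j, x (Sum.inr j) * y (Sum.inl j)) - (∑ j, x (Sum.inl j) * y (Sum.inr j)) = 0)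
    (hdim : finrank F Λ = n)
    (hc : Sum.elim (1 : Fin n → F) (0 : Fin n → F) ∈ Λ) :
    ∃ l : List (Matrix (Fin n ⊕ Fin n) (Fin n ⊕ Fin n) F),
      l.length ≤ n * (n - 1) / 2 + 1 ∧
      (∀ M ∈ l, (∃ j t, M = XiD j t) ∨ (∃ i j t, i ≠ j ∧ M = XiOff i j t)) ∧
      Λ = Submodule.map (Matrix.mulVecLin l.prod)
        (LinearMap.ker (LinearMap.funLeft F F (Sum.inr : Fin n → Fin n ⊕ Fin n))) := by
  classical
  -- the submodule K of second components of elements of Λ with zero first component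
  let e₂ : (Fin n → F) →ₗ[F] (Fin n ⊕ Fin n → F) :=
    { toFun := fun w => Sum.elim 0 w
      map_add' := by intro u v; funext i; cases i <;> simp
      map_smul' := by intro c u; funext i; cases i <;> simp }
  let K : Submodule F (Fin n → F) := Λ.comap e₂
  have hmemK : ∀ w, w ∈ K ↔ Sum.elim (0 : Fin n → F) w ∈ Λ := fun w => Iff.rfl
  obtain ⟨J, hP1, hP2⟩ := exists_coords K
  -- the "sweep" linear map
  let Pm : (Fin n ⊕ Fin n → F) →ₗ[F] (Fin n → F) :=
    { toFun := fun y => fun a => y (Sum.inl a) + if a ∈ J then y (Sum.inr a) else 0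
      map_add' := by
        intro u v; funext a; by_cases h : a ∈ J <;> simp [h] <;> ring
      map_smul' := by
        intro c u; funext a; by_cases h : a ∈ J <;> simp [h] <;> ring }
  let p : ↥Λ →ₗ[F] (Fin n → F) := Pm.comp Λ.subtype
  have hiso' : ∀ x ∈ Λ, ∀ y ∈ Λ,
      (∑ j, x (Sum.inr j) * y (Sum.inl j)) = ∑ j, x (Sum.inl j) * y (Sum.inr j) := by
    intro x hx y hy
    exact sub_eq_zero.mp (hiso x hx y hy)
  have hpinj : Function.Injective p := by
    rw [← LinearMap.ker_eq_bot, LinearMap.ker_eq_bot']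
    intro y hy0
    have h0 : ∀ a, y.1 (Sum.inl a) + (if a ∈ J then y.1 (Sum.inr a) else 0) = 0 :=
      fun a => congrFun hy0 a
    have hnJ : ∀ a, a ∉ J → y.1 (Sum.inl a) = 0 := by
      intro a ha; have := h0 a; rw [if_neg ha, add_zero] at this; exact this
    have hinlJ : ∀ b ∈ J, y.1 (Sum.inl b) = 0 := by
      intro b hb
      obtain ⟨u, huK, huz⟩ := hP2 (fun j => if j = b then 1 else 0)
      have hu : Sum.elim (0 : Fin n → F) u ∈ Λ := (hmemK u).mp huK
      have hiso1 := hiso' (Sum.elim (0 : Fin n → F) u) hu y.1 y.2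
      simp only [Sum.elim_inr, Sum.elim_inl, Pi.zero_apply, zero_mul,
        Finset.sum_const_zero] at hiso1
      have hterm : ∀ j : Fin n, u j * y.1 (Sum.inl j)
          = if j = b then y.1 (Sum.inl b) else 0 := by
        intro j
        by_cases hj : j ∈ J
        · rw [huz j hj]
          by_cases hjb : j = b
          · subst hjb; simp
          · simp [hjb]
        · rw [hnJ j hj, mul_zero]
          have : j ≠ b := fun h => hj (h ▸ hb)
          simp [this]
      rw [Finset.sum_congr rfl (fun j _ => hterm j)] at hiso1
      simpa using hiso1
    have hinl : ∀ a, y.1 (Sum.inl a) = 0 := by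
      intro a; by_cases ha : a ∈ J
      · exact hinlJ a ha
      · exact hnJ a ha
    have hre : y.1 = Sum.elim (0 : Fin n → F) (fun j => y.1 (Sum.inr j)) := by
      funext i; cases i with
      | inl a => simp [hinl a]
      | inr a => simp
    have hwK : (fun j => y.1 (Sum.inr j)) ∈ K := by
      rw [hmemK, ← hre]; exact y.2
    have hzJ : ∀ a ∈ J, y.1 (Sum.inr a) = 0 := by
      intro a ha
      have := h0 a
      rw [hinl a, if_pos ha, zero_add] at this
      exact this
    have : (fun j => y.1 (Sum.inr j)) = (0 : Fin n → F) := hP1 _ hwK hzJ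
    apply Subtype.ext
    funext i
    cases i with
    | inl a => exact hinl a
    | inr a => exact congrFun this a
  have hpsurj : Function.Surjective p := by
    have hfr : finrank F ↥Λ = finrank F (Fin n → F) := by
      rw [hdim, Module.finrank_fintype_fun_eq_card, Fintype.card_fin]
    exact (LinearMap.injective_iff_surjective_of_finrank_eq_finrank hfr).mp hpinj
  let pe : ↥Λ ≃ₗ[F] (Fin n → F) := LinearEquiv.ofBijective p ⟨hpinj, hpsurj⟩
  let r : ↥Λ →ₗ[F] (Fin n → F) := (LinearMap.funLeft F F Sum.inr).comp Λ.subtype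
  let τ : (Fin n → F) →ₗ[F] (Fin n → F) := r.comp (pe.symm : (Fin n → F) →ₗ[F] ↥Λ)
  have keyτ : ∀ y : ↥Λ, τ (Pm y.1) = fun j => y.1 (Sum.inr j) := by
    intro y
    have h1 : Pm y.1 = pe y := rfl
    have h2 : τ (pe y) = r (pe.symm (pe y)) := rfl
    rw [h1, h2, pe.symm_apply_apply]
    rfl
  have hτval : ∀ x : Fin n → F, τ x = fun j => (pe.symm x).1 (Sum.inr j) := fun x => rfl
  have hpval : ∀ x : Fin n → F, Pm (pe.symm x).1 = x := by
    intro x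
    have : Pm (pe.symm x).1 = pe (pe.symm x) := rfl
    rw [this, pe.apply_symm_apply]
  let χ : Fin n → (Fin n → F) := fun b => fun j => if j = b then 1 else 0
  let T : Matrix (Fin n) (Fin n) F := LinearMap.toMatrix' τ
  have hTapp : ∀ a b, T a b = τ (χ b) a := fun a b => by
    have hχ : (Pi.single b 1 : Fin n → F) = χ b := by funext j; simp [χ, Pi.single_apply]
    rw [← hχ]; exact LinearMap.toMatrix'_apply τ a b
  have hTmv : ∀ x, T *ᵥ x = τ x := by
    intro x
    rw [← Matrix.mulVecLin_apply, ← Matrix.toLin'_apply']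
    rw [show T = LinearMap.toMatrix' τ from rfl, Matrix.toLin'_toMatrix']
  -- τ kills the all-ones vector
  have hτ1 : τ (fun _ => (1:F)) = 0 := by
    have hpc0 : Pm (Sum.elim (1 : Fin n → F) (0 : Fin n → F)) = fun _ => (1:F) := by
      funext a
      show Sum.elim (1 : Fin n → F) (0 : Fin n → F) (Sum.inl a)
        + (if a ∈ J then Sum.elim (1 : Fin n → F) (0 : Fin n → F) (Sum.inr a) else 0) = 1
      by_cases h : a ∈ J <;> simp [h]
    have := keyτ ⟨Sum.elim 1 0, hc⟩
    simp only at this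
    rw [hpc0] at this
    rw [this]
    funext j
    simp
  have hrow : ∀ a, ∑ b, T a b = 0 := by
    intro a
    have hsum : ∑ b, χ b = (fun _ => (1:F)) := by
      funext j
      rw [Finset.sum_apply]
      simp [χ]
    calc ∑ b, T a b = ∑ b, τ (χ b) a := by
          exact Finset.sum_congr rfl (fun b _ => hTapp a b)
      _ = (∑ b, τ (χ b)) a := by rw [Finset.sum_apply]
      _ = τ (∑ b, χ b) a := by rw [map_sum]
      _ = 0 := by rw [hsum, hτ1]; rfl
  -- symmetry
  have hbil : ∀ x x' : Fin n → F, ∑ j, τ x j * x' j = ∑ j, τ x' j * x j := by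
    intro x x'
    set y := pe.symm x with hy
    set y' := pe.symm x' with hy'
    have hx : Pm y.1 = x := hpval x
    have hx' : Pm y'.1 = x' := hpval x'
    have hτx : τ x = fun j => y.1 (Sum.inr j) := hτval x
    have hτx' : τ x' = fun j => y'.1 (Sum.inr j) := hτval x'
    rw [hτx, hτx', ← hx, ← hx']
    show ∑ j, y.1 (Sum.inr j) * (y'.1 (Sum.inl j) + if j ∈ J then y'.1 (Sum.inr j) else 0)
      = ∑ j, y'.1 (Sum.inr j) * (y.1 (Sum.inl j) + if j ∈ J then y.1 (Sum.inr j) else 0)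
    have expand : ∀ (u v : Fin n ⊕ Fin n → F),
        ∑ j, u (Sum.inr j) * (v (Sum.inl j) + if j ∈ J then v (Sum.inr j) else 0)
        = (∑ j, u (Sum.inr j) * v (Sum.inl j))
          + ∑ j, (if j ∈ J then u (Sum.inr j) * v (Sum.inr j) else 0) := by
      intro u v
      rw [← Finset.sum_add_distrib]
      apply Finset.sum_congr rfl
      intro j _
      by_cases h : j ∈ J <;> simp [h, mul_add]
    rw [expand, expand]
    have h1 : (∑ j, y.1 (Sum.inr j) * y'.1 (Sum.inl j))
        = ∑ j, y'.1 (Sum.inr j) * y.1 (Sum.inl j) := by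
      rw [hiso' y.1 y.2 y'.1 y'.2]
      exact Finset.sum_congr rfl (fun j _ => mul_comm _ _)
    have h2 : (∑ j, if j ∈ J then y.1 (Sum.inr j) * y'.1 (Sum.inr j) else 0)
        = ∑ j, if j ∈ J then y'.1 (Sum.inr j) * y.1 (Sum.inr j) else 0 := by
      apply Finset.sum_congr rfl
      intro j _
      by_cases h : j ∈ J <;> simp [h, mul_comm]
    rw [h1, h2]
  have hsym : ∀ a b, T a b = T b a := by
    intro a b
    have hpick : ∀ f : Fin n → F, ∑ j, f j * χ a j = f a := by
      intro f
      have : ∀ j, f j * χ a j = if j = a then f j else 0 := by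
        intro j
        by_cases h : j = a <;> simp [χ, h]
      rw [Finset.sum_congr rfl (fun j _ => this j)]
      simp
    have := hbil (χ b) (χ a)
    rw [hpick (τ (χ b))] at this
    have h2 : ∑ j, τ (χ a) j * χ b j = τ (χ a) b := by
      have : ∀ f : Fin n → F, ∑ j, f j * χ b j = f b := by
        intro f
        have hx : ∀ j, f j * χ b j = if j = b then f j else 0 := by
          intro j; by_cases h : j = b <;> simp [χ, h]
        rw [Finset.sum_congr rfl (fun j _ => hx j)]
        simp
      exact this _
    rw [h2] at this
    rw [hTapp a b, hTapp b a, this]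
  -- vanishing on J × J off-diagonal
  have hTJ : ∀ a b, a ∈ J → b ∈ J → a ≠ b → T a b = 0 := by
    intro a b ha hb hab
    obtain ⟨u, huK, huz⟩ := hP2 (χ b)
    have hu : Sum.elim (0 : Fin n → F) u ∈ Λ := (hmemK u).mp huK
    have hpy : Pm (Sum.elim (0 : Fin n → F) u) = χ b := by
      funext a'
      show Sum.elim (0 : Fin n → F) u (Sum.inl a')
        + (if a' ∈ J then Sum.elim (0 : Fin n → F) u (Sum.inr a') else 0) = χ b a'
      by_cases h : a' ∈ J
      · simp only [Sum.elim_inl, Pi.zero_apply, Sum.elim_inr, if_pos h, zero_add]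
        exact huz a' h
      · have : a' ≠ b := fun he => h (he ▸ hb)
        simp [h, χ, this]
    have := keyτ ⟨Sum.elim 0 u, hu⟩
    simp only at this
    rw [hpy] at this
    rw [hTapp a b, this]
    have : u a = χ b a := huz a ha
    simp only [Sum.elim_inr]
    rw [this]
    simp [χ, hab]
  -- the matrices
  let Q : Matrix (Fin n) (Fin n) F := ∑ j ∈ J, Matrix.single j j 1
  have hQapp : ∀ a e, Q a e = if a ∈ J ∧ e = a then (1:F) else 0 := by
    intro a e
    show (∑ j ∈ J, Matrix.single j j (1:F)) a e = _
    rw [Matrix.sum_apply]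
    by_cases ha : a ∈ J
    · rw [Finset.sum_eq_single_of_mem a ha]
      · by_cases he : e = a
        · subst he; simp [ha]
        · rw [Matrix.single_apply_of_ne]
          · simp [ha, he]
          · intro hcon
            exact he hcon.2.symm
      · intro j hj hja
        rw [Matrix.single_apply_of_ne]
        intro hcon
        exact hja hcon.1
    · rw [Finset.sum_eq_zero]
      · simp [ha]
      · intro j hj
        rw [Matrix.single_apply_of_ne]
        intro hcon
        exact ha (hcon.1 ▸ hj)
  have hQmv : ∀ (v : Fin n → F) a, (Q *ᵥ v) a = if a ∈ J then v a else 0 := by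
    intro v a
    show (∑ e, Q a e * v e) = _
    have : ∀ e, Q a e * v e = if a ∈ J ∧ e = a then v a else 0 := by
      intro e
      rw [hQapp]
      by_cases h : a ∈ J ∧ e = a
      · rw [if_pos h, if_pos h, one_mul, h.2]
      · rw [if_neg h, if_neg h, zero_mul]
    rw [Finset.sum_congr rfl (fun e _ => this e)]
    by_cases ha : a ∈ J
    · simp [ha]
    · simp [ha]
  let M : Matrix (Fin n ⊕ Fin n) (Fin n ⊕ Fin n) F := Matrix.fromBlocks 1 Q 0 1
  let A : Matrix (Fin n ⊕ Fin n) (Fin n ⊕ Fin n) F := Matrix.fromBlocks 1 (-Q) 0 1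
  let Bm : Matrix (Fin n ⊕ Fin n) (Fin n ⊕ Fin n) F := Matrix.fromBlocks 1 0 T 1
  have hMv : ∀ y : Fin n ⊕ Fin n → F,
      M *ᵥ y = Sum.elim (Pm y) (fun j => y (Sum.inr j)) := by
    intro y
    show Matrix.fromBlocks 1 Q 0 1 *ᵥ y = _
    rw [Matrix.fromBlocks_mulVec]
    simp only [Matrix.one_mulVec, Matrix.zero_mulVec, zero_add]
    funext i
    cases i with
    | inl a =>
      simp only [Sum.elim_inl, Pi.add_apply]
      rw [hQmv]
      rfl
    | inr a => rfl
  have hBv : ∀ x1 : Fin n → F,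
      Bm *ᵥ (Sum.elim x1 0) = Sum.elim x1 (τ x1) := by
    intro x1
    show Matrix.fromBlocks 1 0 T 1 *ᵥ (Sum.elim x1 0) = _
    rw [Matrix.fromBlocks_mulVec]
    have hcl : (Sum.elim x1 (0 : Fin n → F)) ∘ Sum.inl = x1 := rfl
    have hcr : (Sum.elim x1 (0 : Fin n → F)) ∘ Sum.inr = 0 := rfl
    rw [hcl, hcr]
    simp only [Matrix.one_mulVec, Matrix.mulVec_zero, Matrix.zero_mulVec, add_zero]
    rw [hTmv]
  have hAM : A * M = 1 := by
    show Matrix.fromBlocks 1 (-Q) 0 1 * Matrix.fromBlocks 1 Q 0 1 = 1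
    rw [upper_mul, neg_add_cancel, Matrix.fromBlocks_one]
  -- the two Finsets of generators
  let Pset : Finset (Fin n × Fin n) := Finset.univ.filter
      (fun p : Fin n × Fin n => p.1 < p.2 ∧ ¬(p.1 ∈ J ∧ p.2 ∈ J))
  let lD : List (Matrix (Fin n ⊕ Fin n) (Fin n ⊕ Fin n) F) :=
    J.toList.map (fun j => XiD j (-1))
  let lOff : List (Matrix (Fin n ⊕ Fin n) (Fin n ⊕ Fin n) F) :=
    Pset.toList.map (fun pr => XiOff pr.1 pr.2 (-(T pr.1 pr.2)))
  refine ⟨lD ++ lOff, ?_, ?_, ?_⟩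
  · -- length bound
    rw [List.length_append]
    show (J.toList.map (fun j => XiD j (-1))).length
        + (Pset.toList.map (fun pr => XiOff pr.1 pr.2 (-(T pr.1 pr.2)))).length ≤ _
    rw [List.length_map, List.length_map, Finset.length_toList, Finset.length_toList]
    exact count_bound J
  · -- membership
    intro Mm hMm
    rw [List.mem_append] at hMm
    cases hMm with
    | inl h =>
      rw [List.mem_map] at h
      obtain ⟨j, _, rfl⟩ := h
      exact Or.inl ⟨j, -1, rfl⟩
    | inr h =>
      rw [List.mem_map] at h
      obtain ⟨pr, hpr, rfl⟩ := h
      rw [Finset.mem_toList] at hpr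
      have : pr.1 < pr.2 := (Finset.mem_filter.mp hpr).2.1
      exact Or.inr ⟨pr.1, pr.2, -(T pr.1 pr.2), ne_of_lt this, rfl⟩
  · -- the submodule identity
    have hprodD : lD.prod = A := by
      show (J.toList.map (fun j => XiD j (-1))).prod = A
      have hmm : J.toList.map (fun j => XiD j (-1))
          = (J.toList.map (fun j => Matrix.single j j (-1 : F))).map
              (fun U => Matrix.fromBlocks 1 U 0 1) := by
        rw [List.map_map]
        rfl
      rw [hmm, prod_upper]
      have : (J.toList.map (fun j => Matrix.single j j (-1 : F))).sum
          = ∑ j ∈ J, Matrix.single j j (-1 : F) := Finset.sum_map_toList J _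
      rw [this]
      have : (∑ j ∈ J, Matrix.single j j (-1 : F)) = -Q := by
        show _ = -∑ j ∈ J, Matrix.single j j (1:F)
        rw [← Finset.sum_neg_distrib]
        apply Finset.sum_congr rfl
        intro j _
        rw [← neg_one_smul F (Matrix.single j j (1:F)), Matrix.smul_single,
          smul_eq_mul, mul_one]
      rw [this]
    have hprodOff : lOff.prod = Bm := by
      show (Pset.toList.map (fun pr => XiOff pr.1 pr.2 (-(T pr.1 pr.2)))).prod = Bm
      have hmm : Pset.toList.map (fun pr => XiOff pr.1 pr.2 (-(T pr.1 pr.2)))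
          = (Pset.toList.map (fun pr => (-(T pr.1 pr.2))
              • (Matrix.single pr.1 pr.1 (1:F) - Matrix.single pr.1 pr.2 1
                - Matrix.single pr.2 pr.1 1 + Matrix.single pr.2 pr.2 1))).map
              (fun U => Matrix.fromBlocks 1 0 U 1) := by
        rw [List.map_map]
        rfl
      rw [hmm, prod_lower]
      have hls : (Pset.toList.map (fun pr => (-(T pr.1 pr.2))
              • (Matrix.single pr.1 pr.1 (1:F) - Matrix.single pr.1 pr.2 1
                - Matrix.single pr.2 pr.1 1 + Matrix.single pr.2 pr.2 1))).sum
          = ∑ pr ∈ Pset, (-(T pr.1 pr.2))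
              • (Matrix.single pr.1 pr.1 (1:F) - Matrix.single pr.1 pr.2 1
                - Matrix.single pr.2 pr.1 1 + Matrix.single pr.2 pr.2 1) :=
        Finset.sum_map_toList Pset _
      rw [hls, edge_decomp T J hsym hrow hTJ]
    -- the two-sided computation
    have hstep1 : Submodule.map (Matrix.mulVecLin Bm)
          (LinearMap.ker (LinearMap.funLeft F F (Sum.inr : Fin n → Fin n ⊕ Fin n)))
        = Submodule.map (Matrix.mulVecLin M) Λ := by
      apply le_antisymm
      · rintro z hz
        rw [Submodule.mem_map] at hz
        obtain ⟨x, hx, rfl⟩ := hz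
        have hx2 : ∀ j, x (Sum.inr j) = 0 := by
          intro j
          have := LinearMap.mem_ker.mp hx
          exact congrFun this j
        have hxe : x = Sum.elim (fun a => x (Sum.inl a)) 0 := by
          funext i
          cases i with
          | inl a => rfl
          | inr a => exact hx2 a
        set x1 : Fin n → F := fun a => x (Sum.inl a) with hx1
        rw [Submodule.mem_map]
        refine ⟨(pe.symm x1).1, (pe.symm x1).2, ?_⟩
        rw [Matrix.mulVecLin_apply, Matrix.mulVecLin_apply, hxe, hBv, hMv]
        rw [hpval x1, hτval x1]
      · rintro z hz
        rw [Submodule.mem_map] at hz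
        obtain ⟨y, hy, rfl⟩ := hz
        rw [Submodule.mem_map]
        refine ⟨Sum.elim (Pm y) 0, ?_, ?_⟩
        · rw [LinearMap.mem_ker]
          funext j
          rfl
        · rw [Matrix.mulVecLin_apply, Matrix.mulVecLin_apply, hBv, hMv]
          have := keyτ ⟨y, hy⟩
          simp only at this
          rw [this]
    rw [List.prod_append, hprodD, hprodOff]
    rw [Matrix.mulVecLin_mul, Submodule.map_comp, hstep1, ← Submodule.map_comp,
      ← Matrix.mulVecLin_mul, hAM, Matrix.mulVecLin_one, Submodule.map_id]
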